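/- Let ℏ and ℏ′ be distinct nonzero complex numbers, and let V be a finite-dimensional A-module containing a submodule W such that W is isomorphic to V^{ℏ′}(1) and the quotient V/W is isomorphic to V^ℏ(1). Then the extension splits: V is isomorphic to V^ℏ(1) ⊕ V^{ℏ′}(1). (It is impossible to glue the modules V^ℏ for different values of ℏ.) -/

import Mathlib

/-- A subspace invariant under the two operators `X`, `Y` (i.e. a submodule for
the module structure they define). -/
def AInvariant {V : Type} [AddCommGroup V] [Module ℂ V] (X Y : Module.End ℂ V)
    (p : Submodule ℂ V) : Prop :=
  ∀ v ∈ p, X v ∈ p ∧ Y v ∈ p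

/-- A module (given by a vector space with two operators `X`, `Y`) is
indecomposable if it is nonzero and is not the internal direct sum of two
nonzero invariant subspaces. -/
def AIndecomposable {V : Type} [AddCommGroup V] [Module ℂ V]
    (X Y : Module.End ℂ V) : Prop :=
  (∃ v : V, v ≠ 0) ∧ ∀ p q : Submodule ℂ V, AInvariant X Y p → AInvariant X Y q →
    IsCompl p q → p = ⊥ ∨ q = ⊥

/-- An isomorphism of modules given by pairs of endomorphisms: a linear
equivalence intertwining the respective actions. -/
def AModIso {V W : Type} [AddCommGroup V] [Module ℂ V] [AddCommGroup W] [Module ℂ W]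
    (X Y : Module.End ℂ V) (X' Y' : Module.End ℂ W) : Prop :=
  ∃ e : V ≃ₗ[ℂ] W, (∀ v, e (X v) = X' (e v)) ∧ (∀ v, e (Y v) = Y' (e v))

/-- The `n × n` Jordan block `J_n(ℏ)` with eigenvalue `ℏ`. -/
def jordan (n : ℕ) (ℏ : ℂ) : Matrix (Fin n) (Fin n) ℂ :=
  Matrix.of fun i j : Fin n =>
    if i = j then ℏ else if (j : ℕ) = (i : ℕ) + 1 then 1 else 0

/-- The action of `X` on the module `V^ℏ(n) = ℂⁿ ⊕ ℂⁿ`: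
`X(u,v) = (J_n(ℏ)v, 0)`. -/
noncomputable def VhX (n : ℕ) (ℏ : ℂ) : Module.End ℂ ((Fin n → ℂ) × (Fin n → ℂ)) :=
  LinearMap.prod
    ((Matrix.toLin' (jordan n ℏ)).comp (LinearMap.snd ℂ (Fin n → ℂ) (Fin n → ℂ)))
    (0 : ((Fin n → ℂ) × (Fin n → ℂ)) →ₗ[ℂ] (Fin n → ℂ))

/-- The action of `Y` on the module `V^ℏ(n) = ℂⁿ ⊕ ℂⁿ`: `Y(u,v) = (0, u)`. -/
noncomputable def VhY (n : ℕ) : Module.End ℂ ((Fin n → ℂ) × (Fin n → ℂ)) :=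
  LinearMap.prod (0 : ((Fin n → ℂ) × (Fin n → ℂ)) →ₗ[ℂ] (Fin n → ℂ))
    (LinearMap.fst ℂ (Fin n → ℂ) (Fin n → ℂ))


lemma model_E (c : ℂ) (p : (Fin 1 → ℂ) × (Fin 1 → ℂ)) :
    VhX 1 c (VhY 1 p) + VhY 1 (VhX 1 c p) = c • p := by
  simp [VhX, VhY, Matrix.toLin'_apply, jordan]
  refine Prod.ext ?_ ?_ <;> funext i <;>
    simp [Matrix.mulVec, dotProduct, Subsingleton.elim i (0 : Fin 1)]

lemma model_finrank : Module.finrank ℂ ((Fin 1 → ℂ) × (Fin 1 → ℂ)) = 2 := by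
  simp

lemma AModIso_E {M : Type} [AddCommGroup M] [Module ℂ M] {A B : Module.End ℂ M} {c : ℂ}
    (h : AModIso A B (VhX 1 c) (VhY 1)) : ∀ m, A (B m) + B (A m) = c • m := by
  obtain ⟨e, hA, hB⟩ := h
  intro m
  apply e.injective
  simp only [map_add, map_smul, hA, hB]
  exact model_E c (e m)

lemma AModIso_finrank {M : Type} [AddCommGroup M] [Module ℂ M] {A B : Module.End ℂ M} {c : ℂ}
    (h : AModIso A B (VhX 1 c) (VhY 1)) : Module.finrank ℂ M = 2 := by
  obtain ⟨e, -, -⟩ := h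
  rw [LinearEquiv.finrank_eq e, model_finrank]

/-- It is impossible to glue the modules `V^ℏ` for different values of `ℏ`:
if `ℏ ≠ ℏ′` are nonzero and a finite-dimensional `A`-module `V` has a
submodule `W ≅ V^{ℏ′}(1)` with quotient `V/W ≅ V^ℏ(1)`, then the extension
splits: `V ≅ V^ℏ(1) ⊕ V^{ℏ′}(1)`. -/
theorem no_glue_different_h (ℏ ℏ' : ℂ) (hℏ : ℏ ≠ 0) (hℏ' : ℏ' ≠ 0) (hne : ℏ ≠ ℏ')
    (V : Type) [AddCommGroup V] [Module ℂ V] [FiniteDimensional ℂ V]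
    (X Y : Module.End ℂ V) (hX : X * X = 0) (hY : Y * Y = 0)
    (W : Submodule ℂ V) (hWX : ∀ v ∈ W, X v ∈ W) (hWY : ∀ v ∈ W, Y v ∈ W)
    (hWiso : AModIso (X.restrict hWX) (Y.restrict hWY) (VhX 1 ℏ') (VhY 1))
    (hQiso : AModIso (Submodule.mapQ W W X fun v hv => hWX v hv)
      (Submodule.mapQ W W Y fun v hv => hWY v hv) (VhX 1 ℏ) (VhY 1)) :
    AModIso X Y ((VhX 1 ℏ).prodMap (VhX 1 ℏ')) ((VhY 1).prodMap (VhY 1)) := by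
  obtain ⟨eW, hWA, hWB⟩ := hWiso
  obtain ⟨eQ, hQA, hQB⟩ := hQiso
  set Xr := X.restrict hWX with hXr
  set Yr := Y.restrict hWY with hYr
  have hX0 : ∀ v : V, X (X v) = 0 := fun v => by
    have := LinearMap.ext_iff.mp hX v; simpa [Module.End.mul_apply] using this
  have hY0 : ∀ v : V, Y (Y v) = 0 := fun v => by
    have := LinearMap.ext_iff.mp hY v; simpa [Module.End.mul_apply] using this
  -- `E = XY + YX` acts as `ℏ'` on `W`
  have hEW : ∀ w : W, X (Y (w : V)) + Y (X (w : V)) = ℏ' • (w : V) := by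
    intro w
    have := AModIso_E ⟨eW, hWA, hWB⟩ w
    have h2 := congrArg (Subtype.val) this
    simpa [hXr, hYr, LinearMap.restrict_apply] using h2
  -- `E - ℏ` maps `V` into `W`
  have hEQ : ∀ v : V, X (Y v) + Y (X v) - ℏ • v ∈ W := by
    intro v
    have := AModIso_E ⟨eQ, hQA, hQB⟩ (Submodule.Quotient.mk v)
    rw [Submodule.mapQ_apply, Submodule.mapQ_apply, Submodule.mapQ_apply,
      Submodule.mapQ_apply] at this
    have h2 : (Submodule.Quotient.mk (X (Y v) + Y (X v) - ℏ • v) : V ⧸ W) = 0 := by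
      rw [Submodule.Quotient.mk_sub, Submodule.Quotient.mk_add, Submodule.Quotient.mk_smul]
      rw [this]; abel
    exact (Submodule.Quotient.mk_eq_zero W).mp h2
  have hd : ℏ' - ℏ ≠ 0 := sub_ne_zero.mpr (Ne.symm hne)
  -- the projection onto `W`
  set g : Module.End ℂ V := (ℏ' - ℏ)⁻¹ • (X * Y + Y * X - ℏ • 1) with hg
  have hgapp : ∀ v : V, g v = (ℏ' - ℏ)⁻¹ • (X (Y v) + Y (X v) - ℏ • v) := by
    intro v; simp [hg, Module.End.mul_apply]
  have hgmem : ∀ v : V, g v ∈ W := fun v => by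
    rw [hgapp]; exact W.smul_mem _ (hEQ v)
  have hgW : ∀ w ∈ W, g w = w := by
    intro w hw
    rw [hgapp, hEW ⟨w, hw⟩, ← sub_smul, smul_smul, inv_mul_cancel₀ hd, one_smul]
  have hgX : ∀ v : V, g (X v) = X (g v) := by
    intro v
    rw [hgapp, hgapp, map_smul]
    congr 1
    rw [map_sub, map_add, map_smul, hX0 v, hX0 (Y v)]
    simp
  have hgY : ∀ v : V, g (Y v) = Y (g v) := by
    intro v
    rw [hgapp, hgapp, map_smul]
    congr 1
    rw [map_sub, map_add, map_smul, hY0 v, hY0 (X v)]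
    simp
  set πW : V →ₗ[ℂ] W := g.codRestrict W hgmem with hπW
  set f : V →ₗ[ℂ] ((Fin 1 → ℂ) × (Fin 1 → ℂ)) × ((Fin 1 → ℂ) × (Fin 1 → ℂ)) :=
    LinearMap.prod (eQ.toLinearMap.comp W.mkQ) (eW.toLinearMap.comp πW) with hf
  have hfapp : ∀ v : V, f v = (eQ (Submodule.Quotient.mk v), eW (πW v)) := fun v => rfl
  have hinj : Function.Injective f := by
    rw [← LinearMap.ker_eq_bot, eq_bot_iff]
    intro v hv
    simp only [LinearMap.mem_ker, hfapp, Prod.mk_eq_zero] at hv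
    obtain ⟨h1, h2⟩ := hv
    have hvW : v ∈ W := (Submodule.Quotient.mk_eq_zero W).mp (eQ.map_eq_zero_iff.mp h1)
    have : πW v = 0 := eW.map_eq_zero_iff.mp h2
    have : g v = 0 := congrArg Subtype.val this
    rw [hgW v hvW] at this
    simpa using this
  have hdim : Module.finrank ℂ V =
      Module.finrank ℂ (((Fin 1 → ℂ) × (Fin 1 → ℂ)) × ((Fin 1 → ℂ) × (Fin 1 → ℂ))) := by
    rw [← Submodule.finrank_quotient_add_finrank W,
      AModIso_finrank ⟨eQ, hQA, hQB⟩, AModIso_finrank ⟨eW, hWA, hWB⟩,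
      Module.finrank_prod, model_finrank]
  have hsurj : Function.Surjective f :=
    (LinearMap.injective_iff_surjective_of_finrank_eq_finrank hdim).mp hinj
  set e : V ≃ₗ[ℂ] ((Fin 1 → ℂ) × (Fin 1 → ℂ)) × ((Fin 1 → ℂ) × (Fin 1 → ℂ)) :=
    LinearEquiv.ofBijective f ⟨hinj, hsurj⟩ with he
  have heapp : ∀ v : V, e v = (eQ (Submodule.Quotient.mk v), eW (πW v)) := fun v => rfl
  refine ⟨e, fun v => ?_, fun v => ?_⟩
  · rw [heapp, heapp]
    refine Prod.ext ?_ ?_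
    · show eQ (Submodule.Quotient.mk (X v)) = VhX 1 ℏ (eQ (Submodule.Quotient.mk v))
      have h := hQA (Submodule.Quotient.mk v)
      rwa [Submodule.mapQ_apply] at h
    · show eW (πW (X v)) = VhX 1 ℏ' (eW (πW v))
      have hc : πW (X v) = Xr (πW v) := Subtype.ext (by
        simpa [πW, LinearMap.codRestrict_apply, LinearMap.restrict_apply, hXr] using hgX v)
      rw [hc, hWA]
  · rw [heapp, heapp]
    refine Prod.ext ?_ ?_
    · show eQ (Submodule.Quotient.mk (Y v)) = VhY 1 (eQ (Submodule.Quotient.mk v))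
      have h := hQB (Submodule.Quotient.mk v)
      rwa [Submodule.mapQ_apply] at h
    · show eW (πW (Y v)) = VhY 1 (eW (πW v))
      have hc : πW (Y v) = Yr (πW v) := Subtype.ext (by
        simpa [πW, LinearMap.codRestrict_apply, LinearMap.restrict_apply, hYr] using hgY v)
      rw [hc, hWB]
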